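/- For every graph G on n vertices, μₙ(G) + μₙ(Ḡ) ≤ −1 − s(G)²/n³, where μₙ denotes the smallest adjacency eigenvalue and s(G) = Σ_{u∈V(G)} |d(u) − 2m/n| with m = e(G). -/

import Mathlib

open Matrix SimpleGraph

/-- The eigenvalues of the adjacency matrix of `G`, in descending order:
`graphEig G i` is the `(i+1)`-th largest eigenvalue. -/
noncomputable def graphEig {n : ℕ} (G : SimpleGraph (Fin n)) (i : Fin n) : ℝ :=
  letI := Classical.decRel G.Adj
  letI hH : (G.adjMatrix ℝ).IsHermitian := by rw [Matrix.IsHermitian, conjTranspose_eq_transpose_of_trivial]; exact G.isSymm_adjMatrix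
  hH.eigenvalues (Tuple.sort hH.eigenvalues i.rev)

section Helpers

variable {n : ℕ}

lemma sorted_zero_le (f : Fin n → ℝ) (h : 0 < n) (j : Fin n) :
    f (Tuple.sort f ⟨0, h⟩) ≤ f j := by
  have hm := Tuple.monotone_sort f
  have h2 : (f ∘ Tuple.sort f) ⟨0, h⟩ ≤ (f ∘ Tuple.sort f) ((Tuple.sort f)⁻¹ j) :=
    hm (Fin.mk_le_of_le_val (Nat.zero_le _))
  simpa using h2

lemma rayleigh_lower (A : Matrix (Fin n) (Fin n) ℝ) (hA : A.IsHermitian)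
    (lo : ℝ) (hlo : ∀ i, lo ≤ hA.eigenvalues i) (x : Fin n → ℝ) :
    lo * (x ⬝ᵥ x) ≤ x ⬝ᵥ A *ᵥ x := by
  set U : Matrix (Fin n) (Fin n) ℝ := (hA.eigenvectorUnitary : Matrix (Fin n) (Fin n) ℝ) with hU
  have hsU : star U = Uᵀ := by
    rw [Matrix.star_eq_conjTranspose, conjTranspose_eq_transpose_of_trivial]
  have hUU : U * Uᵀ = 1 := by
    rw [← hsU]; exact (Matrix.mem_unitaryGroup_iff).mp hA.eigenvectorUnitary.2
  set y := Uᵀ *ᵥ x with hy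
  have hform : x ⬝ᵥ A *ᵥ x = ∑ i, hA.eigenvalues i * (y i)^2 := by
    conv_lhs => rw [hA.spectral_theorem, Unitary.conjStarAlgAut_apply]
    rw [hsU, ← mulVec_mulVec, ← mulVec_mulVec, dotProduct_mulVec, ← mulVec_transpose]
    simp [mulVec_diagonal, dotProduct, mul_comm, sq, mul_assoc, mul_left_comm]
    rfl
  have hnorm : x ⬝ᵥ x = ∑ i, (y i)^2 := by
    have : x ⬝ᵥ x = y ⬝ᵥ y := by
      rw [hy, dotProduct_mulVec, ← mulVec_transpose, mulVec_mulVec, transpose_transpose, hUU,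
        one_mulVec]
    rw [this, dotProduct]; simp [sq]
  rw [hform, hnorm, Finset.mul_sum]
  exact Finset.sum_le_sum fun i _ => by nlinarith [hlo i, sq_nonneg (y i)]

lemma graphEig_last_le (hn : 0 < n) (G : SimpleGraph (Fin n))
    (hA : (@SimpleGraph.adjMatrix ℝ (Fin n) G (Classical.decRel G.Adj) _ _).IsHermitian)
    (j : Fin n) :
      graphEig G ⟨n - 1, by omega⟩ ≤ hA.eigenvalues j := by
  unfold graphEig
  have hrev : (⟨n - 1, by omega⟩ : Fin n).rev = ⟨0, hn⟩ := by
    ext; simp [Fin.rev]; omega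
  rw [hrev]
  exact sorted_zero_le _ hn j

lemma quad_compl (G : SimpleGraph (Fin n)) [DecidableRel G.Adj] [DecidableRel Gᶜ.Adj]
    (y : Fin n → ℝ) :
    y ⬝ᵥ (Gᶜ.adjMatrix ℝ) *ᵥ y
      = (∑ i, y i)^2 - y ⬝ᵥ y - y ⬝ᵥ (G.adjMatrix ℝ) *ᵥ y := by
  rw [dotProduct_mulVec_adjMatrix, dotProduct_mulVec_adjMatrix]
  have h1 : (∑ i, y i)^2 = ∑ i, ∑ j, y i * y j := by
    rw [sq, Finset.sum_mul_sum]
  have h2 : y ⬝ᵥ y = ∑ i : Fin n, ∑ j : Fin n, if i = j then y i * y j else 0 := by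
    simp [dotProduct]
  rw [h1, h2, ← Finset.sum_sub_distrib, ← Finset.sum_sub_distrib]
  refine Finset.sum_congr rfl fun i _ => ?_
  rw [← Finset.sum_sub_distrib, ← Finset.sum_sub_distrib]
  refine Finset.sum_congr rfl fun j _ => ?_
  by_cases hij : i = j
  · subst hij; simp [G.irrefl]
  · by_cases ha : G.Adj i j
    · simp [ha, hij, SimpleGraph.compl_adj]
    · simp [ha, hij, SimpleGraph.compl_adj]

lemma row_sum (G : SimpleGraph (Fin n)) [DecidableRel G.Adj] (h : Fin n → ℝ) :
    (∑ i : Fin n, ∑ j : Fin n, if G.Adj i j then h i else 0)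
      = ∑ i : Fin n, (G.degree i : ℝ) * h i := by
  refine Finset.sum_congr rfl fun i _ => ?_
  rw [Finset.sum_ite, Finset.sum_const, Finset.sum_const_zero, add_zero,
    SimpleGraph.degree, neighborFinset_eq_filter]
  simp [mul_comm]

lemma col_sum (G : SimpleGraph (Fin n)) [DecidableRel G.Adj] (h : Fin n → ℝ) :
    (∑ i : Fin n, ∑ j : Fin n, if G.Adj i j then h j else 0)
      = ∑ j : Fin n, (G.degree j : ℝ) * h j := by
  rw [Finset.sum_comm]
  rw [← row_sum G h]
  refine Finset.sum_congr rfl fun i _ => Finset.sum_congr rfl fun j _ => ?_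
  congr 1
  simp only [eq_iff_iff]
  exact G.adj_comm j i

lemma final_arith (lG lGc F s nn τ : ℝ) (hn : 2 ≤ nn)
    (hF : 0 < F) (hs : s ^ 2 ≤ nn * F) (hF3 : F ≤ nn ^ 3)
    (hτ : τ * nn ^ 2 = F)
    (h1 : (lG + lGc) * (F + τ ^ 2 * nn) ≤ -4 * τ * F + (nn * τ) ^ 2 - (F + τ ^ 2 * nn)) :
    lG + lGc ≤ -1 - s ^ 2 / nn ^ 3 := by
  have hn0 : 0 < nn := by linarith
  have hτ0 : 0 < τ := by nlinarith [pow_pos hn0 2]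
  have hNpos : 0 < F + τ ^ 2 * nn := by positivity
  have hNle : τ ^ 2 * nn ≤ F := by nlinarith [pow_pos hn0 3]
  have key : s ^ 2 * (F + τ ^ 2 * nn) ≤ 3 * F ^ 2 * nn := by
    nlinarith [mul_le_mul_of_nonneg_left hNle (sq_nonneg s),
      mul_le_mul_of_nonneg_right hs hF.le, sq_nonneg s, sq_nonneg F]
  have h2 : (nn * τ) ^ 2 = τ * F := by
    have : (nn * τ) ^ 2 = τ * (τ * nn ^ 2) := by ring
    rw [this, hτ]
  have h1' : (lG + lGc) * (F + τ ^ 2 * nn) ≤ -3 * τ * F - (F + τ ^ 2 * nn) := by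
    rw [h2] at h1; linarith
  have hτF : τ * F * nn ^ 3 = F ^ 2 * nn := by
    have : τ * F * nn ^ 3 = (τ * nn ^ 2) * (F * nn) := by ring
    rw [this, hτ]; ring
  have hgoal : (lG + lGc + 1 + s ^ 2 / nn ^ 3) * ((F + τ ^ 2 * nn) * nn ^ 3) ≤ 0 := by
    have e : s ^ 2 / nn ^ 3 * ((F + τ ^ 2 * nn) * nn ^ 3) = s ^ 2 * (F + τ ^ 2 * nn) := by
      field_simp
    have expand : (lG + lGc + 1 + s ^ 2 / nn ^ 3) * ((F + τ ^ 2 * nn) * nn ^ 3)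
        = ((lG + lGc) * (F + τ ^ 2 * nn)) * nn ^ 3 + (F + τ ^ 2 * nn) * nn ^ 3
          + s ^ 2 / nn ^ 3 * ((F + τ ^ 2 * nn) * nn ^ 3) := by ring
    rw [expand, e]
    nlinarith [key, mul_le_mul_of_nonneg_right h1' (pow_pos hn0 3).le, hτF]
  by_contra hcon
  push_neg at hcon
  have hpos : 0 < lG + lGc + 1 + s ^ 2 / nn ^ 3 := by linarith
  nlinarith [mul_pos hpos (mul_pos hNpos (pow_pos hn0 3))]

end Helpers

theorem stmt7 (n : ℕ) (hn : 2 ≤ n) (G : SimpleGraph (Fin n)) :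
    graphEig G ⟨n - 1, by omega⟩ + graphEig Gᶜ ⟨n - 1, by omega⟩ ≤
      -1 - (∑ u : Fin n,
          |((G.neighborSet u).ncard : ℝ) - 2 * (G.edgeSet.ncard : ℝ) / n|) ^ 2 / n ^ 3 := by
  have hn0 : 0 < n := by omega
  letI instG : DecidableRel G.Adj := Classical.decRel G.Adj
  letI instGc : DecidableRel Gᶜ.Adj := Classical.decRel Gᶜ.Adj
  have hHermG : (G.adjMatrix ℝ).IsHermitian := by
    rw [Matrix.IsHermitian, conjTranspose_eq_transpose_of_trivial]; exact G.isSymm_adjMatrix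
  have hHermGc : (Gᶜ.adjMatrix ℝ).IsHermitian := by
    rw [Matrix.IsHermitian, conjTranspose_eq_transpose_of_trivial]; exact Gᶜ.isSymm_adjMatrix
  have hrayG : ∀ x : Fin n → ℝ,
      graphEig G ⟨n - 1, by omega⟩ * (x ⬝ᵥ x) ≤ x ⬝ᵥ (G.adjMatrix ℝ) *ᵥ x :=
    fun x => rayleigh_lower _ hHermG _ (fun j => graphEig_last_le hn0 G hHermG j) x
  have hrayGc : ∀ x : Fin n → ℝ,
      graphEig Gᶜ ⟨n - 1, by omega⟩ * (x ⬝ᵥ x) ≤ x ⬝ᵥ (Gᶜ.adjMatrix ℝ) *ᵥ x :=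
    fun x => rayleigh_lower _ hHermGc _ (fun j => graphEig_last_le hn0 Gᶜ hHermGc j) x
  set m : ℕ := G.edgeFinset.card with hm
  set d : Fin n → ℝ := fun v => (G.degree v : ℝ) with hd
  set g : Fin n → ℝ := fun v => d v - 2 * (m : ℝ) / n with hg
  set F : ℝ := ∑ v, g v ^ 2 with hF
  set s : ℝ := ∑ v, |g v| with hs
  have hncard : ∀ u, ((G.neighborSet u).ncard : ℝ) = d u := by
    intro u
    rw [hd]
    norm_cast
    rw [Set.ncard_eq_toFinset_card']
    rfl
  have hecard : ((G.edgeSet.ncard : ℕ) : ℝ) = (m : ℝ) := by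
    rw [hm]
    norm_cast
    rw [Set.ncard_eq_toFinset_card']
    exact congrArg Finset.card (by ext; simp)
  have hgoalRHS : (∑ u : Fin n,
      |((G.neighborSet u).ncard : ℝ) - 2 * (G.edgeSet.ncard : ℝ) / n|) = s := by
    refine Finset.sum_congr rfl fun u _ => ?_
    rw [hncard u, hecard, hg]
  rw [hgoalRHS]
  have hsum_d : ∑ v, d v = 2 * (m : ℝ) := by
    rw [hd]
    show ∑ v, ((G.degree v : ℕ) : ℝ) = 2 * (m : ℝ)
    exact_mod_cast G.sum_degrees_eq_twice_card_edges
  have hsum_g : ∑ v, g v = 0 := by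
    rw [hg]
    rw [Finset.sum_sub_distrib, hsum_d, Finset.sum_const, Finset.card_univ, Fintype.card_fin,
      nsmul_eq_mul]
    field_simp
    ring
  have hd_bounds : ∀ v, 0 ≤ d v ∧ d v ≤ (n : ℝ) - 1 := by
    intro v
    constructor
    · rw [hd]; positivity
    · rw [hd]
      have := G.degree_lt_card_verts v
      rw [Fintype.card_fin] at this
      have : G.degree v ≤ n - 1 := by omega
      calc (G.degree v : ℝ) ≤ ((n - 1 : ℕ) : ℝ) := by exact_mod_cast this
        _ = (n : ℝ) - 1 := by rw [Nat.cast_sub hn0]; norm_num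
  have hc_bounds : 0 ≤ 2 * (m : ℝ) / n ∧ 2 * (m : ℝ) / n ≤ (n : ℝ) - 1 := by
    constructor
    · exact div_nonneg (mul_nonneg (by norm_num) (Nat.cast_nonneg m)) (Nat.cast_nonneg n)
    · rw [div_le_iff₀ (by exact_mod_cast hn0 : (0:ℝ) < n)]
      have : ∑ v, d v ≤ ∑ _v : Fin n, ((n : ℝ) - 1) :=
        Finset.sum_le_sum fun v _ => (hd_bounds v).2
      rw [hsum_d, Finset.sum_const, Finset.card_univ, Fintype.card_fin, nsmul_eq_mul] at this
      linarith
  have habs : ∀ v, |g v| ≤ (n : ℝ) - 1 := by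
    intro v
    rw [hg, abs_le]
    constructor
    · have := (hd_bounds v).1; have := hc_bounds.2; simp only; linarith
    · have := (hd_bounds v).2; have := hc_bounds.1; simp only; linarith
  have hn1 : (1 : ℝ) ≤ (n : ℝ) := by exact_mod_cast hn0
  have hF_le : F ≤ (n : ℝ) ^ 3 := by
    rw [hF]
    have : ∀ v ∈ Finset.univ, g v ^ 2 ≤ ((n : ℝ) - 1) ^ 2 := fun v _ => by
      have h := habs v
      have := abs_nonneg (g v)
      nlinarith [sq_abs (g v)]
    calc (∑ v, g v ^ 2) ≤ ∑ _v : Fin n, ((n : ℝ) - 1) ^ 2 := Finset.sum_le_sum this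
      _ = (n : ℝ) * ((n : ℝ) - 1) ^ 2 := by
          rw [Finset.sum_const, Finset.card_univ, Fintype.card_fin, nsmul_eq_mul]
      _ ≤ (n : ℝ) ^ 3 := by nlinarith
  have hs_sq : s ^ 2 ≤ (n : ℝ) * F := by
    rw [hs, hF]
    have h := sq_sum_le_card_mul_sum_sq (s := (Finset.univ : Finset (Fin n)))
      (f := fun v => |g v|)
    simp only [Finset.card_univ, Fintype.card_fin, sq_abs] at h
    exact_mod_cast h
  have hF_nonneg : 0 ≤ F := by rw [hF]; positivity
  by_cases hF0 : F = 0
  · -- degenerate case: all degrees equal the average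
    have hgz : ∀ v, g v = 0 := by
      intro v
      have hFz : ∑ i : Fin n, g i ^ 2 = 0 := by rw [← hF]; exact hF0
      have h := (Finset.sum_eq_zero_iff_of_nonneg
        (fun v _ => sq_nonneg (g v))).mp hFz v (Finset.mem_univ v)
      exact pow_eq_zero_iff (by norm_num) |>.mp h
    have hs0 : s = 0 := by rw [hs]; simp [hgz]
    rw [hs0]
    set a : Fin n := ⟨0, by omega⟩ with ha
    set b : Fin n := ⟨1, by omega⟩ with hb
    have hab : a ≠ b := by simp [ha, hb, Fin.ext_iff]
    set x₀ : Fin n → ℝ := fun v => (if v = a then (1:ℝ) else 0) + (if v = b then -1 else 0)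
      with hx₀
    have hsum : ∑ v, x₀ v = 0 := by
      rw [hx₀]
      rw [Finset.sum_add_distrib]
      simp [Finset.sum_ite_eq']
    have hnorm : x₀ ⬝ᵥ x₀ = 2 := by
      rw [dotProduct]
      have hpt : ∀ v, x₀ v * x₀ v = (if v = a then (1:ℝ) else 0) + (if v = b then 1 else 0) := by
        intro v
        by_cases h1 : v = a
        · subst h1
          have : a ≠ b := hab
          simp [hx₀, this]
        · by_cases h2 : v = b
          · subst h2; simp [hx₀, h1]
          · simp [hx₀, h1, h2]
      rw [Finset.sum_congr rfl fun v _ => hpt v, Finset.sum_add_distrib]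
      simp [Finset.sum_ite_eq']
      norm_num
    have h1 := hrayG x₀
    have h2 := hrayGc x₀
    rw [quad_compl G x₀, hsum, hnorm] at h2
    rw [hnorm] at h1
    have hcomb : (graphEig G ⟨n - 1, by omega⟩ + graphEig Gᶜ ⟨n - 1, by omega⟩) * 2 ≤ -2 := by
      have e : (graphEig G ⟨n - 1, by omega⟩ + graphEig Gᶜ ⟨n - 1, by omega⟩) * 2
          = graphEig G ⟨n - 1, by omega⟩ * 2 + graphEig Gᶜ ⟨n - 1, by omega⟩ * 2 := by ring
      rw [e]
      have h0 : (0:ℝ)^2 = 0 := by norm_num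
      linarith
    have hrhs : -1 - (0:ℝ)^2 / (n:ℝ)^3 = -1 := by norm_num
    rw [hrhs]
    linarith
  · have hFpos : 0 < F := lt_of_le_of_ne hF_nonneg (Ne.symm hF0)
    set τ : ℝ := F / (n : ℝ) ^ 2 with hτdef
    have hτ : τ * (n : ℝ) ^ 2 = F := by
      rw [hτdef]
      field_simp
    set x : Fin n → ℝ := fun v => g v - τ with hx
    set y : Fin n → ℝ := fun v => g v + τ with hy
    have hxx : x ⬝ᵥ x = F + τ ^ 2 * n := by
      rw [dotProduct]
      have hpt : ∀ v, x v * x v = g v ^ 2 - (2 * τ) * g v + τ ^ 2 := fun v => by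
        rw [hx]; ring
      rw [Finset.sum_congr rfl fun v _ => hpt v, Finset.sum_add_distrib,
        Finset.sum_sub_distrib, ← Finset.mul_sum, hsum_g, Finset.sum_const,
        Finset.card_univ, Fintype.card_fin, nsmul_eq_mul, ← hF]
      ring
    have hyy : y ⬝ᵥ y = F + τ ^ 2 * n := by
      rw [dotProduct]
      have hpt : ∀ v, y v * y v = g v ^ 2 + (2 * τ) * g v + τ ^ 2 := fun v => by
        rw [hy]; ring
      rw [Finset.sum_congr rfl fun v _ => hpt v, Finset.sum_add_distrib,
        Finset.sum_add_distrib, ← Finset.mul_sum, hsum_g, Finset.sum_const,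
        Finset.card_univ, Fintype.card_fin, nsmul_eq_mul, ← hF]
      ring
    have hsumy : ∑ v, y v = (n : ℝ) * τ := by
      rw [hy]
      rw [Finset.sum_add_distrib, hsum_g, Finset.sum_const, Finset.card_univ,
        Fintype.card_fin, nsmul_eq_mul]
      ring
    have hdg : ∑ v, d v * g v = F := by
      have hpt : ∀ v, d v * g v = g v ^ 2 + (2 * (m:ℝ) / n) * g v := fun v => by
        have : d v = g v + 2 * (m:ℝ) / n := by rw [hg]; ring
        rw [this]; ring
      rw [Finset.sum_congr rfl fun v _ => hpt v, Finset.sum_add_distrib, ← Finset.mul_sum,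
        hsum_g, ← hF]
      ring
    have hdiff : x ⬝ᵥ (G.adjMatrix ℝ) *ᵥ x - y ⬝ᵥ (G.adjMatrix ℝ) *ᵥ y = -4 * τ * F := by
      rw [dotProduct_mulVec_adjMatrix, dotProduct_mulVec_adjMatrix, ← Finset.sum_sub_distrib]
      have step1 : ∀ i : Fin n,
          ((∑ j, if G.Adj i j then x i * x j else 0) - ∑ j, if G.Adj i j then y i * y j else 0)
            = (∑ j, if G.Adj i j then (-2*τ) * g i else 0)
              + (∑ j, if G.Adj i j then (-2*τ) * g j else 0) := by
        intro i
        rw [← Finset.sum_sub_distrib, ← Finset.sum_add_distrib]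
        refine Finset.sum_congr rfl fun j _ => ?_
        by_cases h : G.Adj i j
        · simp only [h, if_true, hx, hy]; ring
        · simp [h]
      rw [Finset.sum_congr rfl fun i _ => step1 i, Finset.sum_add_distrib,
        row_sum G (fun i => (-2*τ) * g i), col_sum G (fun j => (-2*τ) * g j)]
      have e : ∀ v : Fin n, (G.degree v : ℝ) * ((-2*τ) * g v) = (-2*τ) * (d v * g v) := by
        intro v; rw [hd]; ring
      rw [Finset.sum_congr rfl fun v _ => e v, ← Finset.mul_sum, hdg]
      ring
    have h1 := hrayG x
    have h2 := hrayGc y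
    rw [quad_compl G y, hsumy, hyy] at h2
    rw [hxx] at h1
    apply final_arith _ _ F s (n : ℝ) τ (by exact_mod_cast hn) hFpos hs_sq hF_le hτ
    have e : (graphEig G ⟨n - 1, by omega⟩ + graphEig Gᶜ ⟨n - 1, by omega⟩) * (F + τ ^ 2 * n)
        = graphEig G ⟨n - 1, by omega⟩ * (F + τ ^ 2 * n)
          + graphEig Gᶜ ⟨n - 1, by omega⟩ * (F + τ ^ 2 * n) := by ring
    rw [e]
    linarith
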